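/- Identification of conditional PNS with multi-hypothetical terms (Theorem 'Identification of conditional PNS with multi-hypothetical terms'): In the vector potential-outcomes model with covariates, let P ≥ 1, let x₀, x₁, …, x_P ∈ 𝒳 be treatments with μ_c {X = x_p} > 0 for every p ∈ {0, 1, …, P}, and let y₁, …, y_P ∈ 𝒴 be thresholds. Assume conditional exogeneity given C = c (U and X independent under μ_c) and conditional almost-sure monotonicity of the structural function over U. Then μ_c.real {ω | ∀ p ∈ {1, …, P}, f x_{p−1} c (U ω) ≺ y_p ∧ y_p ≼ f x_p c (U ω)} = max ((min over p ∈ {1,…,P} of ρ(y_p; x_{p−1}, c)) − (max over p ∈ {1,…,P} of ρ(y_p; x_p, c))) 0. -/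

import Mathlib

open MeasureTheory ProbabilityTheory

lemma exists_least_of_chain {ι α : Type*} [Fintype ι] [Nonempty ι] [PartialOrder α]
    (g : ι → α) (h : ∀ i j, g i ≤ g j ∨ g j ≤ g i) : ∃ i0, ∀ i, g i0 ≤ g i := by
  classical
  obtain ⟨a, ha, hmin⟩ := Finset.exists_minimal (s := Finset.univ.image g)
    ⟨g (Classical.arbitrary ι), Finset.mem_image_of_mem _ (Finset.mem_univ _)⟩
  obtain ⟨i0, -, rfl⟩ := Finset.mem_image.mp ha
  refine ⟨i0, fun i => ?_⟩
  rcases h i0 i with h' | h'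
  · exact h'
  · have hm := hmin (Finset.mem_image_of_mem _ (Finset.mem_univ i))
    exact hm h'

lemma exists_greatest_of_chain {ι α : Type*} [Fintype ι] [Nonempty ι] [PartialOrder α]
    (g : ι → α) (h : ∀ i j, g i ≤ g j ∨ g j ≤ g i) : ∃ i0, ∀ i, g i ≤ g i0 :=
  exists_least_of_chain (α := αᵒᵈ) g (fun i j => h j i)

/-- Identification of conditional PNS with multi-hypothetical terms: under conditional
exogeneity and conditional almost-sure monotonicity of the structural function over `U`,
`PNS(ȳ;x̄,c) = max (min_p ρ(y_p;x_{p−1},c) − max_p ρ(y_p;x_p,c)) 0`. -/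
theorem identification_of_conditional_PNS_multi_hypothetical
    {Ω 𝒳 𝒞 𝒰 𝒴 : Type*} [MeasurableSpace Ω]
    [MeasurableSpace 𝒳] [MeasurableSingletonClass 𝒳]
    [MeasurableSpace 𝒞] [MeasurableSingletonClass 𝒞]
    [LinearOrder 𝒰] [MeasurableSpace 𝒰] [LinearOrder 𝒴] [MeasurableSpace 𝒴]
    (hRays : ∀ y : 𝒴, MeasurableSet {v : 𝒴 | v < y} ∧ MeasurableSet {v : 𝒴 | v ≤ y})
    (μ : Measure Ω) [IsProbabilityMeasure μ]
    (U : Ω → 𝒰) (hU : Measurable U) (X : Ω → 𝒳) (hX : Measurable X)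
    (C : Ω → 𝒞) (hC : Measurable C)
    (f : 𝒳 → 𝒞 → 𝒰 → 𝒴) (hf : ∀ x c, Measurable (f x c))
    (c : 𝒞) (hc : 0 < μ {ω | C ω = c})
    (μc : Measure Ω) (hμc : μc = μ[|{ω | C ω = c}])
    (hexo : IndepFun U X μc)
    (hmono : ∃ S : Set 𝒰, MeasurableSet S ∧ μc {ω | U ω ∉ S} = 0 ∧
      ((∀ x, MonotoneOn (f x c) S) ∨ (∀ x, AntitoneOn (f x c) S)))
    (P : ℕ) (hP : 0 < P) (x : Fin (P + 1) → 𝒳) (ys : Fin P → 𝒴)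
    (hx : ∀ p : Fin (P + 1), 0 < μc {ω | X ω = x p})
    (ρ : 𝒴 → 𝒳 → ℝ)
    (hρ : ∀ (z : 𝒴) (x' : 𝒳), ρ z x' =
      (μc {ω | f (X ω) (C ω) (U ω) < z ∧ X ω = x'}).toReal
        / (μc {ω | X ω = x'}).toReal) :
    (μc {ω | ∀ p : Fin P,
          f (x p.castSucc) c (U ω) < ys p ∧ ys p ≤ f (x p.succ) c (U ω)}).toReal =
      max ((Finset.univ.inf' ⟨⟨0, hP⟩, Finset.mem_univ _⟩
              fun p : Fin P => ρ (ys p) (x p.castSucc))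
          - (Finset.univ.sup' ⟨⟨0, hP⟩, Finset.mem_univ _⟩
              fun p : Fin P => ρ (ys p) (x p.succ))) 0 := by
  classical
  obtain ⟨S, hSm, hSnull, hmono⟩ := hmono
  have hne : Nonempty (Fin P) := ⟨⟨0, hP⟩⟩
  have hsm : MeasurableSet {ω | C ω = c} := hC (measurableSet_singleton c)
  have hμc_prob : IsProbabilityMeasure μc := by
    rw [hμc]; exact cond_isProbabilityMeasure hc.ne'
  -- a.e. facts
  have hCc : ∀ᵐ ω ∂μc, C ω = c := by
    rw [ae_iff, hμc, cond_apply hsm]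
    have : {ω | C ω = c} ∩ {ω | ¬ C ω = c} = ∅ := by
      ext ω; simp only [Set.mem_inter_iff, Set.mem_setOf_eq, Set.mem_empty_iff_false]
      tauto
    rw [this, measure_empty, mul_zero]
  have hUS : ∀ᵐ ω ∂μc, U ω ∈ S := by
    rw [ae_iff]; exact hSnull
  -- the down/up sets
  set A : Fin P → Set 𝒰 := fun p => {u ∈ S | f (x p.castSucc) c u < ys p} with hA
  set B : Fin P → Set 𝒰 := fun p => {u ∈ S | f (x p.succ) c u < ys p} with hB
  have hmeas : ∀ (x' : 𝒳) (z : 𝒴), MeasurableSet {u ∈ S | f x' c u < z} := by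
    intro x' z
    exact hSm.inter ((hf x' c) (hRays z).1)
  have hAm : ∀ p, MeasurableSet (A p) := fun p => hmeas _ _
  have hBm : ∀ p, MeasurableSet (B p) := fun p => hmeas _ _
  -- chain property
  have key : ∀ (x1 x2 : 𝒳) (y1 y2 : 𝒴),
      {u ∈ S | f x1 c u < y1} ⊆ {u ∈ S | f x2 c u < y2} ∨
      {u ∈ S | f x2 c u < y2} ⊆ {u ∈ S | f x1 c u < y1} := by
    intro x1 x2 y1 y2
    by_contra hcon
    push_neg at hcon
    obtain ⟨h1, h2⟩ := hcon
    rw [Set.not_subset] at h1 h2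
    obtain ⟨a, ⟨haS, ha1⟩, hna⟩ := h1
    obtain ⟨b, ⟨hbS, hb2⟩, hnb⟩ := h2
    have ha2 : y2 ≤ f x2 c a := by
      by_contra h; push_neg at h; exact hna ⟨haS, h⟩
    have hb1 : y1 ≤ f x1 c b := by
      by_contra h; push_neg at h; exact hnb ⟨hbS, h⟩
    rcases hmono with hm | hm
    · rcases le_total a b with hab | hab
      · exact absurd ((hm x2 haS hbS hab).trans_lt hb2) (not_lt.mpr ha2)
      · exact absurd ((hm x1 hbS haS hab).trans_lt ha1) (not_lt.mpr hb1)
    · rcases le_total a b with hab | hab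
      · exact absurd ((hm x1 haS hbS hab).trans_lt ha1) (not_lt.mpr hb1)
      · exact absurd ((hm x2 hbS haS hab).trans_lt hb2) (not_lt.mpr ha2)
  -- rewrite ρ
  have hρ_eq : ∀ (z : 𝒴) (x' : 𝒳), 0 < μc {ω | X ω = x'} →
      ρ z x' = (μc (U ⁻¹' {u ∈ S | f x' c u < z})).toReal := by
    intro z x' hx'
    have hae : {ω | f (X ω) (C ω) (U ω) < z ∧ X ω = x'}
        =ᵐ[μc] ((U ⁻¹' {u ∈ S | f x' c u < z} ∩ X ⁻¹' {x'} : Set Ω)) := by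
      rw [Filter.eventuallyEq_set]
      filter_upwards [hCc, hUS] with ω hω1 hω2
      simp only [Set.mem_setOf_eq, Set.mem_inter_iff, Set.mem_preimage,
        Set.mem_singleton_iff, Set.mem_sep_iff]
      constructor
      · rintro ⟨h1, h2⟩
        subst h2
        rw [hω1] at h1
        exact ⟨⟨hω2, h1⟩, rfl⟩
      · rintro ⟨⟨-, h1⟩, h2⟩
        subst h2
        rw [hω1]
        exact ⟨h1, rfl⟩
    have hmul := hexo.measure_inter_preimage_eq_mul _ _ (hmeas x' z)
      (measurableSet_singleton x')
    have hb0 : (μc {ω | X ω = x'}).toReal ≠ 0 :=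
      ENNReal.toReal_ne_zero.mpr ⟨hx'.ne', measure_ne_top _ _⟩
    have hXeq : X ⁻¹' {x'} = {ω | X ω = x'} := rfl
    rw [hρ, measure_congr hae, hmul, hXeq, ENNReal.toReal_mul, mul_div_assoc,
      div_self hb0, mul_one]
  have hρA : ∀ p : Fin P, ρ (ys p) (x p.castSucc) = (μc (U ⁻¹' A p)).toReal :=
    fun p => hρ_eq _ _ (hx _)
  have hρB : ∀ p : Fin P, ρ (ys p) (x p.succ) = (μc (U ⁻¹' B p)).toReal :=
    fun p => hρ_eq _ _ (hx _)
  -- extremal sets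
  obtain ⟨p0, hp0⟩ := exists_least_of_chain A (fun i j => key _ _ _ _)
  obtain ⟨q0, hq0⟩ := exists_greatest_of_chain B (fun i j => key _ _ _ _)
  -- event rewrite
  have hE : {ω | ∀ p : Fin P,
        f (x p.castSucc) c (U ω) < ys p ∧ ys p ≤ f (x p.succ) c (U ω)}
      =ᵐ[μc] U ⁻¹' (A p0 \ B q0) := by
    rw [Filter.eventuallyEq_set]
    filter_upwards [hUS] with ω hω
    simp only [Set.mem_setOf_eq, Set.mem_preimage, Set.mem_diff, hA, hB, Set.mem_sep_iff]
    constructor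
    · intro h
      exact ⟨⟨hω, (h p0).1⟩, fun hb => absurd hb.2 (not_lt.mpr (h q0).2)⟩
    · rintro ⟨hA0, hB0⟩ p
      refine ⟨(hp0 p hA0).2, ?_⟩
      by_contra hlt
      push_neg at hlt
      exact hB0 (hq0 p ⟨hω, hlt⟩)
  -- compute inf' and sup'
  have hABle : ∀ (s t : Set 𝒰), s ⊆ t →
      (μc (U ⁻¹' s)).toReal ≤ (μc (U ⁻¹' t)).toReal := fun s t hst =>
    ENNReal.toReal_mono (measure_ne_top _ _) (measure_mono (Set.preimage_mono hst))
  have hinf : (Finset.univ.inf' ⟨⟨0, hP⟩, Finset.mem_univ _⟩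
      fun p : Fin P => (μc (U ⁻¹' A p)).toReal) = (μc (U ⁻¹' A p0)).toReal := by
    refine le_antisymm (Finset.inf'_le (fun p : Fin P => (μc (U ⁻¹' A p)).toReal) (Finset.mem_univ p0)) ?_
    exact Finset.le_inf' _ _ fun p _ => hABle _ _ (hp0 p)
  have hsup : (Finset.univ.sup' ⟨⟨0, hP⟩, Finset.mem_univ _⟩
      fun p : Fin P => (μc (U ⁻¹' B p)).toReal) = (μc (U ⁻¹' B q0)).toReal := by
    refine le_antisymm ?_ (Finset.le_sup' (fun p : Fin P => (μc (U ⁻¹' B p)).toReal) (Finset.mem_univ q0))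
    exact Finset.sup'_le _ _ fun p _ => hABle _ _ (hq0 p)
  simp only [hρA, hρB]
  rw [measure_congr hE, hinf, hsup]
  rcases key (x q0.succ) (x p0.castSucc) (ys q0) (ys p0) with hBA | hAB
  · -- B q0 ⊆ A p0
    have hBA' : B q0 ⊆ A p0 := hBA
    have hdiff : μc (U ⁻¹' (A p0 \ B q0)) = μc (U ⁻¹' A p0) - μc (U ⁻¹' B q0) := by
      rw [Set.preimage_diff]
      exact measure_diff (Set.preimage_mono hBA') ((hU (hBm q0)).nullMeasurableSet)
        (measure_ne_top _ _)
    have hle : μc (U ⁻¹' B q0) ≤ μc (U ⁻¹' A p0) :=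
      measure_mono (Set.preimage_mono hBA')
    rw [hdiff, ENNReal.toReal_sub_of_le hle (measure_ne_top _ _),
      max_eq_left (sub_nonneg.mpr (ENNReal.toReal_mono (measure_ne_top _ _) hle))]
  · -- A p0 ⊆ B q0
    have hAB' : A p0 ⊆ B q0 := hAB
    rw [Set.diff_eq_empty.mpr hAB', Set.preimage_empty, measure_empty]
    rw [max_eq_right (sub_nonpos.mpr (hABle _ _ hAB'))]
    simp
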